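/- An invertible operator B on a Hilbert space is a commutator of two square-zero operators if and only if B is similar to A₀ ⊕ (-A₀) for some invertible operator A₀ (acting on a subspace of half the dimension). -/

import Mathlib

/-- An invertible operator `B` on a Hilbert space is a commutator of two square-zero
operators iff `B` is similar to `A₀ ⊕ (-A₀)` for some invertible operator `A₀`. -/
theorem stmt_3 {H : Type*} [NormedAddCommGroup H] [InnerProductSpace ℂ H]
    [CompleteSpace H] (B : H →L[ℂ] H) (hB : IsUnit B) :
    (∃ M N : H →L[ℂ] H, M * M = 0 ∧ N * N = 0 ∧ B = M * N - N * M) ↔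
      (∃ (K : Submodule ℂ H) (A₀ : K →L[ℂ] K) (S : H ≃L[ℂ] K × K),
        IsUnit A₀ ∧
        ((S.symm : K × K →L[ℂ] H).comp
            ((A₀.prodMap (-A₀)).comp (S : H →L[ℂ] K × K))) = B) := by
  constructor
  · rintro ⟨M, N, hM, hN, hBdef⟩
    set B' : H →L[ℂ] H := ↑hB.unit⁻¹ with hB'def
    have hBB' : ∀ x, B (B' x) = x := fun x => by
      have h : (B * B') x = (1 : H →L[ℂ] H) x := by rw [hB.mul_val_inv]
      simpa using h
    have hB'B : ∀ x, B' (B x) = x := fun x => by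
      have h : (B' * B) x = (1 : H →L[ℂ] H) x := by rw [hB.val_inv_mul]
      simpa using h
    have hM' : ∀ x, M (M x) = 0 := fun x => by
      have h : (M * M) x = (0 : H →L[ℂ] H) x := by rw [hM]
      simpa using h
    have hN' : ∀ x, N (N x) = 0 := fun x => by
      have h : (N * N) x = (0 : H →L[ℂ] H) x := by rw [hN]
      simpa using h
    have hBx : ∀ x, B x = M (N x) - N (M x) := fun x => by
      rw [hBdef]; simp [ContinuousLinearMap.mul_apply]
    -- anticommutation
    have hMB : ∀ x, M (B x) = -(B (M x)) := fun x => by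
      rw [hBx, hBx (M x)]
      simp [hM', hN']
    have hMB' : ∀ x, M (B' x) = -(B' (M x)) := fun x => by
      have h := hMB (B' x)
      rw [hBB'] at h
      have h2 : B' (M x) = B' (-(B (M (B' x)))) := by rw [← h]
      rw [map_neg, hB'B] at h2
      rw [h2, neg_neg]
    set K : Submodule ℂ H := LinearMap.ker (M : H →ₗ[ℂ] H) with hK
    set K' : Submodule ℂ H := LinearMap.ker (N : H →ₗ[ℂ] H) with hK'
    haveI : CompleteSpace K := (ContinuousLinearMap.isClosed_ker M).completeSpace_coe
    haveI : CompleteSpace K' := (ContinuousLinearMap.isClosed_ker N).completeSpace_coe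
    have memK : ∀ x, M x ∈ K := fun x => by simp [hK, LinearMap.mem_ker, hM' x]
    have memK' : ∀ x, N x ∈ K' := fun x => by simp [hK', LinearMap.mem_ker, hN' x]
    -- a vector in both kernels is zero
    have hzero : ∀ x, M x = 0 → N x = 0 → x = 0 := fun x hMx hNx => by
      have hBz : B x = 0 := by rw [hBx, hMx, hNx, map_zero, map_zero, sub_zero]
      have := hB'B x
      rw [hBz, map_zero] at this
      exact this.symm
    -- B and B' preserve K
    have hBK : ∀ x : H, M x = 0 → M (B x) = 0 := fun x hx => by
      rw [hMB, hx, map_zero, neg_zero]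
    have hB'K : ∀ x : H, M x = 0 → M (B' x) = 0 := fun x hx => by
      rw [hMB', hx, map_zero, neg_zero]
    -- A₀ : restriction of B to K
    set A₀ : K →L[ℂ] K :=
      (B.comp K.subtypeL).codRestrict K (fun x => by
        simpa [hK, LinearMap.mem_ker] using hBK x.1 x.2) with hA₀def
    set A₀' : K →L[ℂ] K :=
      (B'.comp K.subtypeL).codRestrict K (fun x => by
        simpa [hK, LinearMap.mem_ker] using hB'K x.1 x.2) with hA₀'def
    have hA₀coe : ∀ x : K, (A₀ x : H) = B x := fun x => rfl
    have hA₀unit : IsUnit A₀ := by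
      refine isUnit_iff_exists.2 ⟨A₀', ?_, ?_⟩
      · ext x
        exact congrArg _ (Subtype.ext (hBB' (x : H)))
      · ext x
        exact congrArg _ (Subtype.ext (hB'B (x : H)))
    -- φ : K' → K, restriction of M
    set φ : K' →L[ℂ] K :=
      (M.comp K'.subtypeL).codRestrict K (fun x => memK x.1) with hφdef
    have hφcoe : ∀ x : K', (φ x : H) = M x := fun x => rfl
    have hφinj : LinearMap.ker (φ : K' →ₗ[ℂ] K) = ⊥ := by
      rw [LinearMap.ker_eq_bot']
      intro x hx
      have h2 : M (x : H) = 0 := congrArg Subtype.val hx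
      exact Subtype.ext (hzero _ h2 x.2)
    have hφsurj : LinearMap.range (φ : K' →ₗ[ℂ] K) = ⊤ := by
      rw [LinearMap.range_eq_top]
      intro y
      refine ⟨⟨N (B' (y : H)), memK' _⟩, ?_⟩
      apply Subtype.ext
      show M (N (B' (y : H))) = (y : H)
      have h1 : M (B' (y : H)) = 0 := hB'K _ y.2
      have h2 := hBx (B' (y : H))
      rw [hBB', h1, map_zero, sub_zero] at h2
      exact h2.symm
    set Φ : K' ≃L[ℂ] K := ContinuousLinearEquiv.ofBijective φ hφinj hφsurj with hΦdef
    have hΦapp : ∀ x : K', Φ x = φ x := fun x => rfl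
    -- T : K × K → H
    set T : K × K →L[ℂ] H :=
      K.subtypeL.coprod (K'.subtypeL.comp (Φ.symm : K →L[ℂ] K')) with hTdef
    have hTapp : ∀ p : K × K, T p = (p.1 : H) + ((Φ.symm p.2 : K') : H) := fun p => by
      simp [hTdef]
    have hTinj : LinearMap.ker (T : K × K →ₗ[ℂ] H) = ⊥ := by
      rw [LinearMap.ker_eq_bot']
      intro r h
      rw [ContinuousLinearMap.coe_coe, hTapp] at h
      have hMu : M (((Φ.symm r.2 : K') : H)) = 0 := by
        have := congrArg M h
        rw [map_add, map_zero, (show M (r.1 : H) = 0 from (r.1).2), zero_add] at this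
        exact this
      have hNu : N (((Φ.symm r.2 : K') : H)) = 0 := (Φ.symm r.2).2
      have hu0 : ((Φ.symm r.2 : K') : H) = 0 := hzero _ hMu hNu
      have hr2 : Φ.symm r.2 = 0 := Subtype.ext hu0
      have h2 : r.2 = 0 := by
        have := congrArg Φ hr2
        rwa [Φ.apply_symm_apply, map_zero] at this
      have h1 : (r.1 : H) = 0 := by rw [hu0, add_zero] at h; exact h
      exact Prod.ext (Subtype.ext h1) h2
    have hTsurj : LinearMap.range (T : K × K →ₗ[ℂ] H) = ⊤ := by
      rw [LinearMap.range_eq_top]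
      intro v
      set u : K' := ⟨-(N (M (B' v))), neg_mem (memK' _)⟩ with hu
      refine ⟨(⟨M (N (B' v)), memK _⟩, Φ u), ?_⟩
      rw [ContinuousLinearMap.coe_coe, hTapp]
      simp only [Φ.symm_apply_apply]
      show M (N (B' v)) + -(N (M (B' v))) = v
      have := hBx (B' v)
      rw [hBB'] at this
      rw [← sub_eq_add_neg, ← this]
    set E : (K × K) ≃L[ℂ] H := ContinuousLinearEquiv.ofBijective T hTinj hTsurj with hEdef
    have hEapp : ∀ p : K × K, E p = T p := fun p => rfl
    refine ⟨K, A₀, E.symm, hA₀unit, ?_⟩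
    have key : ∀ p : K × K, E ((A₀.prodMap (-A₀)) p) = B (E p) := by
      rintro ⟨x, y⟩
      rw [hEapp, hEapp, hTapp, hTapp]
      show ((A₀ x : K) : H) + ((Φ.symm (-A₀ y) : K') : H)
          = B ((x : H) + ((Φ.symm y : K') : H))
      have hsymm : Φ.symm (A₀ y) = ⟨N (y : H), memK' _⟩ := by
        rw [ContinuousLinearEquiv.symm_apply_eq]
        apply Subtype.ext
        show B (y : H) = M (N (y : H))
        have hMy : M (y : H) = 0 := y.2
        rw [hBx, hMy, map_zero, sub_zero]
      have hBu : B ((Φ.symm y : K') : H) = -(N (y : H)) := by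
        have hNu : N ((Φ.symm y : K') : H) = 0 := (Φ.symm y).2
        have hMu : M ((Φ.symm y : K') : H) = (y : H) := by
          have := congrArg (Subtype.val) (Φ.apply_symm_apply y)
          exact this
        rw [hBx, hNu, map_zero, zero_sub, hMu]
      rw [map_add, hBu, map_neg, hsymm, hA₀coe]
      simp
    ext v
    simp only [ContinuousLinearMap.coe_comp', Function.comp_apply,
      ContinuousLinearEquiv.coe_coe, ContinuousLinearEquiv.symm_symm]
    calc E ((A₀.prodMap (-A₀)) (E.symm v)) = B (E (E.symm v)) := key _
      _ = B v := by rw [E.apply_symm_apply]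
  · rintro ⟨K, A₀, S, hA₀, hS⟩
    set M₀ : K × K →L[ℂ] K × K := (ContinuousLinearMap.snd ℂ K K).prod 0 with hM₀
    set N₀ : K × K →L[ℂ] K × K :=
      (0 : K × K →L[ℂ] K).prod (A₀.comp (ContinuousLinearMap.fst ℂ K K)) with hN₀
    refine ⟨(S.symm : K × K →L[ℂ] H).comp (M₀.comp (S : H →L[ℂ] K × K)),
      (S.symm : K × K →L[ℂ] H).comp (N₀.comp (S : H →L[ℂ] K × K)), ?_, ?_, ?_⟩
    · ext x
      simp [hM₀, ContinuousLinearMap.mul_apply]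
    · ext x
      simp [hN₀, ContinuousLinearMap.mul_apply]
    · rw [← hS]
      ext x
      simp only [ContinuousLinearMap.mul_apply, ContinuousLinearMap.sub_apply,
        ContinuousLinearMap.coe_comp', Function.comp_apply, ContinuousLinearEquiv.coe_coe,
        ContinuousLinearEquiv.apply_symm_apply]
      rw [← map_sub]
      congr 1
      simp [hM₀, hN₀, Prod.ext_iff]
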